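/- Assume X_A and X_B are conditionally independent given Y, the prior is stable, and f is a differentiable convex function with f(1)=0 whose derivative f' is injective. Let ŝ_A^tr(x_A)(y) = Pr[Y=y|X_A=x_A] and ŝ_B^tr(x_B)(y) = Pr[Y=y|X_B=x_B] be the truthful strategies. If ŝ_B : Σ_B → Δ_Σ satisfies ŝ_B(x_B) ≠ ŝ_B^tr(x_B) for some x_B, then Pay(ŝ_A^tr, ŝ_B) < Pay(ŝ_A^tr, ŝ_B^tr) = MI^f(X_A;X_B); symmetrically, if ŝ_A : Σ_A → Δ_Σ satisfies ŝ_A(x_A) ≠ ŝ_A^tr(x_A) for some x_A, then Pay(ŝ_A, ŝ_B^tr) < MI^f(X_A;X_B). -/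

import Mathlib

noncomputable section

variable {SA SB S : Type*}

/-- Joint probability `Pr[X_A = a, X_B = b]` induced by the joint pmf `ν` of `(X_A, X_B, Y)`. -/
def jAB [Fintype S] (ν : SA → SB → S → ℝ) (a : SA) (b : SB) : ℝ := ∑ y, ν a b y

/-- Joint probability `Pr[X_A = a, Y = y]`. -/
def jAY [Fintype SB] (ν : SA → SB → S → ℝ) (a : SA) (y : S) : ℝ := ∑ b, ν a b y

/-- Joint probability `Pr[X_B = b, Y = y]`. -/
def jBY [Fintype SA] (ν : SA → SB → S → ℝ) (b : SB) (y : S) : ℝ := ∑ a, ν a b y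

/-- Marginal probability `Pr[X_A = a]`. -/
def prA [Fintype SB] [Fintype S] (ν : SA → SB → S → ℝ) (a : SA) : ℝ := ∑ b, ∑ y, ν a b y

/-- Marginal probability `Pr[X_B = b]`. -/
def prB [Fintype SA] [Fintype S] (ν : SA → SB → S → ℝ) (b : SB) : ℝ := ∑ a, ∑ y, ν a b y

/-- Marginal probability `Pr[Y = y]`. -/
def prY [Fintype SA] [Fintype SB] (ν : SA → SB → S → ℝ) (y : S) : ℝ := ∑ a, ∑ b, ν a b y

/-- Pointwise mutual information `K(a,b) = Pr[a,b]/(Pr[a]·Pr[b])`. -/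
def K [Fintype SA] [Fintype SB] [Fintype S] (ν : SA → SB → S → ℝ) (a : SA) (b : SB) : ℝ :=
  jAB ν a b / (prA ν a * prB ν b)

/-- Conditional probability `Pr[Y = y | X_A = a]`. -/
def condA [Fintype SB] [Fintype S] (ν : SA → SB → S → ℝ) (a : SA) (y : S) : ℝ :=
  jAY ν a y / prA ν a

/-- Conditional probability `Pr[Y = y | X_B = b]`. -/
def condB [Fintype SA] [Fintype S] (ν : SA → SB → S → ℝ) (b : SB) (y : S) : ℝ :=
  jBY ν b y / prB ν b

/-- `X_A` and `X_B` are conditionally independent given `Y`: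
`Pr[a, b | y] = Pr[a | y] · Pr[b | y]` for all `a, b, y`. -/
def CondIndep [Fintype SA] [Fintype SB] (ν : SA → SB → S → ℝ) : Prop :=
  ∀ a b y, ν a b y / prY ν y = (jAY ν a y / prY ν y) * (jBY ν b y / prY ν y)

/-- `ν` is a probability mass function. -/
def IsPMF [Fintype SA] [Fintype SB] [Fintype S] (ν : SA → SB → S → ℝ) : Prop :=
  (∀ a b y, 0 ≤ ν a b y) ∧ ∑ a, ∑ b, ∑ y, ν a b y = 1

/-- `p` is a probability vector: nonnegative entries summing to `1`. -/
def IsProbVec {T : Type*} [Fintype T] (p : T → ℝ) : Prop := (∀ t, 0 ≤ p t) ∧ ∑ t, p t = 1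

/-- The convex conjugate `f*(x) = sup_t (t·x − f(t))`, as a real-valued supremum. -/
def fconj (f : ℝ → ℝ) (x : ℝ) : ℝ := sSup (Set.range fun t => t * x - f t)

/-- `c` is a subgradient of `f` at `t`: `f(s) ≥ f(t) + c·(s − t)` for all `s`. -/
def IsSubgradientAt (f : ℝ → ℝ) (t c : ℝ) : Prop := ∀ s : ℝ, f t + c * (s - t) ≤ f s

/-- The f-mutual information `MI^f(X_A;X_B) = Σ_{a,b} Pr[a]·Pr[b]·f(K(a,b))`. -/
def MIf [Fintype SA] [Fintype SB] [Fintype S] (f : ℝ → ℝ) (ν : SA → SB → S → ℝ) : ℝ :=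
  ∑ a, ∑ b, prA ν a * prB ν b * f (K ν a b)

/-- The agreement `g(a,b) = Σ_y h_A(a)(y)·h_B(b)(y)/p(y)`. -/
def gagr [Fintype S] (hA : SA → S → ℝ) (hB : SB → S → ℝ) (p : S → ℝ) (a : SA) (b : SB) : ℝ :=
  ∑ y, hA a y * hB b y / p y

/-- Expected `f`-mutual information gain
`MIG^f(h_A,h_B,p) = Σ Pr[a,b]·f'(g(a,b)) − Σ Pr[a]·Pr[b]·f*(f'(g(a,b)))`. -/
def MIG [Fintype SA] [Fintype SB] [Fintype S] (f : ℝ → ℝ) (ν : SA → SB → S → ℝ)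
    (hA : SA → S → ℝ) (hB : SB → S → ℝ) (p : S → ℝ) : ℝ :=
  ∑ a, ∑ b, jAB ν a b * deriv f (gagr hA hB p a b)
    - ∑ a, ∑ b, prA ν a * prB ν b * fconj f (deriv f (gagr hA hB p a b))

/-- Each agent's expected payment in the multi-task common ground mechanism `MCG(f)`. -/
def Pay [Fintype SA] [Fintype SB] [Fintype S] (f : ℝ → ℝ) (ν : SA → SB → S → ℝ)
    (sA : SA → S → ℝ) (sB : SB → S → ℝ) : ℝ :=
  MIG f ν sA sB (prY ν)

/-- `({a^{x_A}}, {b^{x_B}}, r)` is a solution of the agreement system: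
probability vectors, `r` strictly positive, with
`Σ_y a^{x_A}(y)·b^{x_B}(y)/r(y) = K(x_A,x_B)` for all `x_A, x_B`. -/
def AgreementSolution [Fintype SA] [Fintype SB] [Fintype S] (ν : SA → SB → S → ℝ)
    (a : SA → S → ℝ) (b : SB → S → ℝ) (r : S → ℝ) : Prop :=
  (∀ xa, IsProbVec (a xa)) ∧ (∀ xb, IsProbVec (b xb)) ∧ IsProbVec r ∧ (∀ y, 0 < r y) ∧
    ∀ xa xb, (∑ y, a xa y * b xb y / r y) = K ν xa xb

/-- The prior is well-defined: any two solutions of the agreement system coincide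
up to a permutation of `Σ`. -/
def WellDefinedPrior [Fintype SA] [Fintype SB] [Fintype S] (ν : SA → SB → S → ℝ) : Prop :=
  ∀ (a : SA → S → ℝ) (b : SB → S → ℝ) (r : S → ℝ)
    (c : SA → S → ℝ) (d : SB → S → ℝ) (r' : S → ℝ),
    AgreementSolution ν a b r → AgreementSolution ν c d r' →
    ∃ π : Equiv.Perm S, ∀ y, r (π y) = r' y ∧ (∀ xa, a xa (π y) = c xa y)
      ∧ (∀ xb, b xb (π y) = d xb y)

/-- The prior is stable: fixing the truthful `A`-side (resp. `B`-side) of the agreement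
system, the only solution for the other side is the truthful one. -/
def StablePrior [Fintype SA] [Fintype SB] [Fintype S] (ν : SA → SB → S → ℝ) : Prop :=
  (∀ b : SB → S → ℝ, (∀ xb, IsProbVec (b xb)) →
    (∀ xa xb, (∑ y, condA ν xa y * b xb y / prY ν y) = K ν xa xb) →
    ∀ xb y, b xb y = condB ν xb y) ∧
  (∀ a : SA → S → ℝ, (∀ xa, IsProbVec (a xa)) →
    (∀ xa xb, (∑ y, a xa y * condB ν xb y / prY ν y) = K ν xa xb) →
    ∀ xa y, a xa y = condA ν xa y)

lemma tangent_le' {f : ℝ → ℝ} (hconv : ConvexOn ℝ Set.univ f) (hdiff : Differentiable ℝ f)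
    (x y : ℝ) : f x + deriv f x * (y - x) ≤ f y := by
  rcases lt_trichotomy x y with h | h | h
  · have := hconv.deriv_le_slope (Set.mem_univ x) (Set.mem_univ y) h (hdiff x)
    rw [slope_def_field] at this
    have h0 : 0 < y - x := by linarith
    rw [le_div_iff₀ h0] at this
    linarith
  · simp [h]
  · have := hconv.slope_le_deriv (Set.mem_univ y) (Set.mem_univ x) h (hdiff x)
    rw [slope_def_field] at this
    have h0 : 0 < x - y := by linarith
    rw [div_le_iff₀ h0] at this
    nlinarith

lemma tangent_lt' {f : ℝ → ℝ} (hconv : ConvexOn ℝ Set.univ f) (hdiff : Differentiable ℝ f)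
    (hinj : Function.Injective (deriv f)) {x y : ℝ} (hne : x ≠ y) :
    f x + deriv f x * (y - x) < f y := by
  have hmono : Monotone (deriv f) :=
    monotoneOn_univ.mp (hconv.monotoneOn_deriv (fun z _ => hdiff z))
  have hsc : StrictConvexOn ℝ Set.univ f :=
    StrictMono.strictConvexOn_univ_of_deriv hdiff.continuous
      (hmono.strictMono_of_injective hinj)
  rcases lt_or_gt_of_ne hne with h | h
  · have := hsc.deriv_lt_slope (Set.mem_univ x) (Set.mem_univ y) h (hdiff x)
    rw [slope_def_field] at this
    have h0 : 0 < y - x := by linarith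
    rw [lt_div_iff₀ h0] at this
    linarith
  · have := hsc.slope_lt_deriv (Set.mem_univ y) (Set.mem_univ x) h (hdiff x)
    rw [slope_def_field] at this
    have h0 : 0 < x - y := by linarith
    rw [div_lt_iff₀ h0] at this
    nlinarith

lemma g_truth' [Fintype SA] [Fintype SB] [Fintype S] (ν : SA → SB → S → ℝ)
    (hA : ∀ a, 0 < prA ν a) (hB : ∀ b, 0 < prB ν b) (hY : ∀ y, 0 < prY ν y)
    (hci : CondIndep ν) (a : SA) (b : SB) :
    gagr (condA ν) (condB ν) (prY ν) a b = K ν a b := by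
  have hpa : prA ν a ≠ 0 := (hA a).ne'
  have hpb : prB ν b ≠ 0 := (hB b).ne'
  unfold gagr K jAB
  rw [eq_div_iff (mul_ne_zero hpa hpb), Finset.sum_mul]
  apply Finset.sum_congr rfl
  intro y _
  have hp : prY ν y ≠ 0 := (hY y).ne'
  have hci' : jAY ν a y * jBY ν b y = ν a b y * prY ν y := by
    have h := hci a b y
    field_simp at h
    linarith
  unfold condA condB
  field_simp
  linear_combination hci'

lemma pay_formula' [Fintype SA] [Fintype SB] [Fintype S] (f : ℝ → ℝ) (ν : SA → SB → S → ℝ)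
    (hA : ∀ a, 0 < prA ν a) (hB : ∀ b, 0 < prB ν b)
    (hconj : ∀ t : ℝ, fconj f (deriv f t) = t * deriv f t - f t)
    (hA' : SA → S → ℝ) (hB' : SB → S → ℝ) :
    Pay f ν hA' hB' = MIf f ν - ∑ a, ∑ b, prA ν a * prB ν b *
      (f (K ν a b) - (f (gagr hA' hB' (prY ν) a b)
        + deriv f (gagr hA' hB' (prY ν) a b) * (K ν a b - gagr hA' hB' (prY ν) a b))) := by
  have key : ∀ a b, jAB ν a b = prA ν a * prB ν b * K ν a b := by
    intro a b
    unfold K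
    rw [mul_div_assoc']
    exact (mul_div_cancel_left₀ _ (mul_ne_zero (hA a).ne' (hB b).ne')).symm
  unfold Pay MIG MIf
  rw [← Finset.sum_sub_distrib, ← Finset.sum_sub_distrib]
  apply Finset.sum_congr rfl
  intro a _
  rw [← Finset.sum_sub_distrib, ← Finset.sum_sub_distrib]
  apply Finset.sum_congr rfl
  intro b _
  rw [hconj, key a b]
  ring
/-- Strict truthfulness of `MCG(f)`: under conditional independence, a stable prior,
and a differentiable convex `f` with injective derivative, the truthful strategy
profile earns `MI^f(X_A;X_B)`, and any unilateral deviation from truth-telling earns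
strictly less. -/
theorem stmt_8 [Fintype SA] [Fintype SB] [Fintype S] [Nonempty SA] [Nonempty SB] [Nonempty S]
    (ν : SA → SB → S → ℝ) (hν : IsPMF ν)
    (hA : ∀ a, 0 < prA ν a) (hB : ∀ b, 0 < prB ν b) (hY : ∀ y, 0 < prY ν y)
    (hci : CondIndep ν) (hst : StablePrior ν)
    (f : ℝ → ℝ) (hconv : ConvexOn ℝ Set.univ f) (hdiff : Differentiable ℝ f) (hf1 : f 1 = 0)
    (hconj : ∀ t : ℝ, fconj f (deriv f t) = t * deriv f t - f t)
    (hinj : Function.Injective (deriv f)) :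
    Pay f ν (condA ν) (condB ν) = MIf f ν
    ∧ (∀ sB : SB → S → ℝ, (∀ b, IsProbVec (sB b)) →
        (∃ b, sB b ≠ condB ν b) →
        Pay f ν (condA ν) sB < Pay f ν (condA ν) (condB ν))
    ∧ (∀ sA : SA → S → ℝ, (∀ a, IsProbVec (sA a)) →
        (∃ a, sA a ≠ condA ν a) →
        Pay f ν sA (condB ν) < MIf f ν) := by
  obtain ⟨hst1, hst2⟩ := hst
  have payf := pay_formula' f ν hA hB hconj
  have gt' := g_truth' ν hA hB hY hci
  have truthful : Pay f ν (condA ν) (condB ν) = MIf f ν := by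
    rw [payf]
    have hz : (∑ a, ∑ b, prA ν a * prB ν b *
        (f (K ν a b) - (f (gagr (condA ν) (condB ν) (prY ν) a b)
          + deriv f (gagr (condA ν) (condB ν) (prY ν) a b)
            * (K ν a b - gagr (condA ν) (condB ν) (prY ν) a b)))) = 0 := by
      apply Finset.sum_eq_zero
      intro a _
      apply Finset.sum_eq_zero
      intro b _
      rw [gt' a b]
      ring
    rw [hz, sub_zero]
  have main : ∀ (hA' : SA → S → ℝ) (hB' : SB → S → ℝ),
      (∃ a b, gagr hA' hB' (prY ν) a b ≠ K ν a b) →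
      Pay f ν hA' hB' < MIf f ν := by
    intro hA' hB' ⟨a0, b0, hne0⟩
    rw [payf]
    have hpos : 0 < ∑ a, ∑ b, prA ν a * prB ν b *
        (f (K ν a b) - (f (gagr hA' hB' (prY ν) a b)
          + deriv f (gagr hA' hB' (prY ν) a b) * (K ν a b - gagr hA' hB' (prY ν) a b))) := by
      have hnn : ∀ a b, 0 ≤ prA ν a * prB ν b *
          (f (K ν a b) - (f (gagr hA' hB' (prY ν) a b)
            + deriv f (gagr hA' hB' (prY ν) a b) * (K ν a b - gagr hA' hB' (prY ν) a b))) := by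
        intro a b
        have := tangent_le' hconv hdiff (gagr hA' hB' (prY ν) a b) (K ν a b)
        exact mul_nonneg (mul_nonneg (hA a).le (hB b).le) (by linarith)
      apply Finset.sum_pos' (fun a _ => Finset.sum_nonneg fun b _ => hnn a b)
      refine ⟨a0, Finset.mem_univ a0, ?_⟩
      apply Finset.sum_pos' (fun b _ => hnn a0 b)
      refine ⟨b0, Finset.mem_univ b0, ?_⟩
      have := tangent_lt' hconv hdiff hinj hne0
      exact mul_pos (mul_pos (hA a0) (hB b0)) (by linarith)
    linarith
  refine ⟨truthful, ?_, ?_⟩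
  · intro sB hsB ⟨b0, hb0⟩
    rw [truthful]
    apply main
    by_contra h
    push_neg at h
    have heq : ∀ xa xb, (∑ y, condA ν xa y * sB xb y / prY ν y) = K ν xa xb := fun xa xb =>
      h xa xb
    exact hb0 (funext fun y => hst1 sB hsB heq b0 y)
  · intro sA hsA ⟨a0, ha0⟩
    apply main
    by_contra h
    push_neg at h
    have heq : ∀ xa xb, (∑ y, sA xa y * condB ν xb y / prY ν y) = K ν xa xb := fun xa xb =>
      h xa xb
    exact ha0 (funext fun y => hst2 sA hsA heq a0 y)
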